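/- For every integer n ≥ 1, the following identity holds in the ring ℤ[q^{±1}, t^{±1}][z,w] of polynomials in z, w over Laurent polynomials in q, t: Σ_{D} q^{dinv(D)} t^{area(D)} · Π_{2 ≤ i ≤ n, b_i(D) > b_{i−1}(D)} (1 + z·q^{−b_i(D)}) · Π_{2 ≤ i ≤ n, a_i > a_{i−1}} (1 + w·t^{−a_i}), summed over all Dyck paths D of size n (with area sequence (a_1,…,a_n)), equals Σ_{(D,S)} q^{dinv_∘(D,S)} t^{area_∘(D,S)} z^{peak_∘(D,S)} w^{rise_∘(D,S)}, summed over all ∘-decorated Dyck paths (D,S) of size n. -/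

import Mathlib

open Finset

namespace DeltaCat

/-- `i`-th entry (0-indexed) of an area sequence, defaulting to `0`. -/
def ent (l : List ℕ) (i : ℕ) : ℕ := l.getD i 0

/-- `l` is the area sequence of a Dyck path (of size `l.length ≥ 1`): it is nonempty,
starts with `0`, and consecutive entries increase by at most one. -/
def IsDyck (l : List ℕ) : Prop :=
  l ≠ [] ∧ ent l 0 = 0 ∧ ∀ i < l.length, i + 1 < l.length → ent l (i + 1) ≤ ent l i + 1

instance (l : List ℕ) : Decidable (IsDyck l) := by unfold IsDyck; infer_instance

/-- the area of a Dyck path -/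
def area (l : List ℕ) : ℕ := l.sum

/-- the diagonal inversions of a Dyck path: pairs `(i,j)`, `i < j`, with
`a_i = a_j` or `a_i = a_j + 1` (0-indexed rows). -/
def dinvPairs (l : List ℕ) : Finset (ℕ × ℕ) :=
  (Finset.range l.length ×ˢ Finset.range l.length).filter
    (fun p => p.1 < p.2 ∧ (ent l p.1 = ent l p.2 ∨ ent l p.1 = ent l p.2 + 1))

/-- the number of diagonal inversions -/
def dinv (l : List ℕ) : ℕ := (dinvPairs l).card

/-- `b'(k) = #{j > k : a_j = a_k} + #{j < k : a_j = a_k + 1}` (0-indexed rows). -/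
def bval (l : List ℕ) (k : ℕ) : ℕ :=
  ((Finset.range l.length).filter (fun j => k < j ∧ ent l j = ent l k)).card +
  ((Finset.range l.length).filter (fun j => j < k ∧ ent l j = ent l k + 1)).card

/-- row `i` (0-indexed) is a double rise -/
def IsRise (l : List ℕ) (i : ℕ) : Prop := i + 1 < l.length ∧ ent l (i + 1) = ent l i + 1

instance (l : List ℕ) (i : ℕ) : Decidable (IsRise l i) := by unfold IsRise; infer_instance

/-- row `i` (0-indexed) is a peak -/
def IsPeak (l : List ℕ) (i : ℕ) : Prop := i < l.length ∧ ¬ IsRise l i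

instance (l : List ℕ) (i : ℕ) : Decidable (IsPeak l i) := by unfold IsPeak; infer_instance

/-- `Rise_∘(D,S)`: the decorated rows which are double rises -/
def riseSet (l : List ℕ) (S : Finset ℕ) : Finset ℕ := S.filter (fun i => IsRise l i)

/-- `Peak_∘(D,S)`: the decorated rows which are peaks -/
def peakSet (l : List ℕ) (S : Finset ℕ) : Finset ℕ := S.filter (fun i => IsPeak l i)

/-- `area_∘(D,S)` -/
def areaC (l : List ℕ) (S : Finset ℕ) : ℕ := area l - ∑ i ∈ riseSet l S, ent l (i + 1)

/-- `dinv_∘(D,S)` -/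
def dinvC (l : List ℕ) (S : Finset ℕ) : ℕ := dinv l - ∑ i ∈ peakSet l S, bval l i

/-- the largest row index (0-indexed) attaining the maximal area value -/
def lastMaxRow (l : List ℕ) : ℕ :=
  ((Finset.range l.length).filter
    (fun i => ∀ j ∈ Finset.range l.length, ent l j ≤ ent l i)).sup id

/-- `S` is a valid set of ∘-decorations on the rows of `l` : a set of rows not containing
the largest index attaining the maximal area value. -/
def ValidDec (l : List ℕ) (S : Finset ℕ) : Prop :=
  (∀ i ∈ S, i < l.length) ∧ lastMaxRow l ∉ S

instance (l : List ℕ) (S : Finset ℕ) : Decidable (ValidDec l S) := by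
  unfold ValidDec; infer_instance

/-- the (0-indexed) rows where the path touches the diagonal, i.e. the starts of segments -/
def segStarts (l : List ℕ) : List ℕ :=
  (List.range l.length).filter (fun i => ent l i == 0)

/-- the touch composition of a Dyck path: the list of lengths of the maximal segments -/
def touchComp (l : List ℕ) : List ℕ :=
  List.zipWith (fun cur next => next - cur) (segStarts l) ((segStarts l).drop 1 ++ [l.length])

/-- the rise-touch composition `α^Rise(D,S)`: the touch composition with the number of
decorated double rises in each segment subtracted from the corresponding part. -/
def riseTouch (l : List ℕ) (S : Finset ℕ) : List ℕ :=
  List.zipWith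
    (fun cur next => (next - cur) - ((riseSet l S).filter (fun i => cur ≤ i ∧ i < next)).card)
    (segStarts l) ((segStarts l).drop 1 ++ [l.length])

/-- all lists of length `n` with entries at most `n`; this contains every Dyck path
area sequence of size `n`. -/
def allSeqs (n : ℕ) : Finset (List ℕ) :=
  (Finset.univ : Finset (Fin n → Fin (n + 1))).image fun v => (List.ofFn v).map Fin.val

/-- the Finset of all Dyck paths of size `n` (encoded by their area sequences) -/
def dyckPaths (n : ℕ) : Finset (List ℕ) := (allSeqs n).filter IsDyck

/-- the Finset of all ∘-decorated Dyck paths of size `n` -/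
def decPaths (n : ℕ) : Finset (List ℕ × Finset ℕ) :=
  ((allSeqs n) ×ˢ (Finset.range n).powerset).filter fun p => IsDyck p.1 ∧ ValidDec p.1 p.2

/-- `Cat^Rise_{α,k,ℓ}(q,t)`, the generating function of ∘-decorated Dyck paths of size
`|α| + ℓ` with `k` decorated peaks, `ℓ` decorated double rises and rise-touch composition
`α`, by the statistics `dinv_∘` and `area_∘`; it is `0` when `k < 0` or `ℓ < 0`. -/
def CatRise {R : Type*} [CommRing R] (q t : R) (α : List ℕ) (k ℓ : ℤ) : R :=
  if 0 ≤ k ∧ 0 ≤ ℓ then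
    ∑ p ∈ (decPaths (α.sum + ℓ.toNat)).filter
        (fun p => (peakSet p.1 p.2).card = k.toNat ∧ (riseSet p.1 p.2).card = ℓ.toNat ∧
          riseTouch p.1 p.2 = α),
      q ^ dinvC p.1 p.2 * t ^ areaC p.1 p.2
  else 0

end DeltaCat


namespace DeltaCat

/-- the list of rows of `l` (0-indexed) in reading order: rows are listed by decreasing
area value, and among rows of equal area value by decreasing row index. -/
def readingList (l : List ℕ) : List ℕ :=
  ((List.range (l.foldr max 0 + 1)).reverse.map
    fun v => ((List.range l.length).filter fun k => ent l k == v).reverse).flatten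

/-- the `b`-sequence of `l` (0-indexed): `bAt l i` is `b'` of the row in
reading-order position `i`. -/
def bAt (l : List ℕ) (i : ℕ) : ℕ := bval l ((readingList l).getD i 0)

end DeltaCat

open DeltaCat

/-- Laurent polynomials in the two variables `q` and `t` over `ℤ`. -/
abbrev LaurentQT := LaurentPolynomial (LaurentPolynomial ℤ)

/-- `q^m` as a Laurent polynomial in `q` and `t` -/
noncomputable def qpow (m : ℤ) : LaurentQT := LaurentPolynomial.C (LaurentPolynomial.T m)

/-- `t^m` as a Laurent polynomial in `q` and `t` -/
noncomputable def tpow (m : ℤ) : LaurentQT := LaurentPolynomial.T m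

/-- the ring `ℤ[q^{±1}, t^{±1}][z,w]` -/
abbrev ZW := MvPolynomial (Fin 2) LaurentQT

/-- the variable `z` -/
noncomputable def z : ZW := MvPolynomial.X 0

/-- the variable `w` -/
noncomputable def w : ZW := MvPolynomial.X 1

namespace DeltaCat
namespace Pf

lemma step {l : List ℕ} (hl : IsDyck l) {i : ℕ} (h : i + 1 < l.length) :
    ent l (i + 1) ≤ ent l i + 1 :=
  hl.2.2 i (Nat.lt_of_succ_lt h) h

lemma ent_le_foldr (l : List ℕ) : ∀ k < l.length, ent l k ≤ l.foldr max 0 := by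
  induction l with
  | nil => simp
  | cons a t ih =>
    intro k hk
    cases k with
    | zero => simp [ent, List.getD]
    | succ k =>
      simp only [List.length_cons, Nat.succ_lt_succ_iff] at hk
      have := ih k hk
      simp only [ent, List.getD_cons_succ, List.foldr_cons] at *
      omega

lemma foldr_attained (l : List ℕ) (h : l ≠ []) : ∃ k < l.length, ent l k = l.foldr max 0 := by
  induction l with
  | nil => simp at h
  | cons a t ih =>
    rcases eq_or_ne t [] with rfl | ht
    · exact ⟨0, by simp, by simp [ent, List.getD]⟩
    · obtain ⟨k, hk, he⟩ := ih ht
      rcases le_or_gt (t.foldr max 0) a with hc | hc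
      · exact ⟨0, by simp, by simp [ent, List.getD]; omega⟩
      · refine ⟨k + 1, by simpa using Nat.succ_lt_succ hk, ?_⟩
        simp only [ent, List.getD_cons_succ, List.foldr_cons] at he ⊢
        omega

/-- crossing lemma -/
lemma cross {l : List ℕ} (hl : IsDyck l) {p q c : ℕ} (hpq : p ≤ q) (hq : q < l.length)
    (hp : ent l p ≤ c) (hqc : c + 1 ≤ ent l q) :
    ∃ m, p ≤ m ∧ m < q ∧ ent l m = c ∧ ent l (m + 1) = c + 1 := by
  have hpq' : p < q := by
    rcases eq_or_lt_of_le hpq with rfl | h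
    · omega
    · exact h
  classical
  set s : Finset ℕ := (Finset.Ico p q).filter (fun j => ent l j ≤ c) with hs
  have hpmem : p ∈ s := by simp [hs, hpq', hp]
  have hne : s.Nonempty := ⟨p, hpmem⟩
  set m := s.max' hne with hm
  have hmmem : m ∈ s := s.max'_mem hne
  simp only [hs, Finset.mem_filter, Finset.mem_Ico] at hmmem
  obtain ⟨⟨hpm, hmq⟩, hmc⟩ := hmmem
  have hsucc : c + 1 ≤ ent l (m + 1) := by
    rcases eq_or_lt_of_le (Nat.succ_le_of_lt hmq) with he | hlt
    · rw [show m + 1 = q from he]; exact hqc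
    · by_contra hcon
      push_neg at hcon
      have : m + 1 ∈ s := by
        simp only [hs, Finset.mem_filter, Finset.mem_Ico]
        exact ⟨⟨by omega, hlt⟩, by omega⟩
      have := s.le_max' _ this
      omega
  have hstep : ent l (m + 1) ≤ ent l m + 1 := step hl (by omega)
  exact ⟨m, hpm, hmq, by omega, by omega⟩

lemma attained {l : List ℕ} (hl : IsDyck l) {v k : ℕ} (hk : k < l.length) (hv : v ≤ ent l k) :
    ∃ j < l.length, ent l j = v := by
  cases v with
  | zero => exact ⟨0, by omega, hl.2.1⟩
  | succ c =>
    obtain ⟨m, _, hmk, _, hm1⟩ := cross hl (Nat.zero_le k) hk (by rw [hl.2.1]; omega) hv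
    exact ⟨m + 1, by omega, hm1⟩

/-- the reading order relation: `prec l x y` iff row `x` comes strictly before row `y`. -/
def prec (l : List ℕ) (x y : ℕ) : Prop := ent l y < ent l x ∨ (ent l x = ent l y ∧ y < x)

lemma prec_ne {l : List ℕ} {x y : ℕ} (h : prec l x y) : x ≠ y := by
  rintro rfl; unfold prec at h; omega

lemma prec_asymm {l : List ℕ} {x y : ℕ} (h : prec l x y) : ¬ prec l y x := by
  unfold prec at *; omega

lemma mem_readingList {l : List ℕ} {k : ℕ} : k ∈ readingList l ↔ k < l.length := by
  unfold readingList
  simp only [List.mem_flatten, List.mem_map, List.mem_reverse, List.mem_range,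
    List.mem_filter, beq_iff_eq]
  constructor
  · rintro ⟨bl, ⟨v, hv, rfl⟩, hk⟩
    rw [List.mem_reverse, List.mem_filter] at hk
    exact List.mem_range.mp hk.1
  · intro hk
    exact ⟨_, ⟨ent l k, by have := ent_le_foldr l k hk; omega, rfl⟩,
      by simp [List.mem_range, hk]⟩

lemma pairwise_reading (l : List ℕ) : (readingList l).Pairwise (prec l) := by
  unfold readingList
  rw [List.pairwise_flatten]
  constructor
  · rintro bl hbl
    simp only [List.mem_map, List.mem_reverse, List.mem_range] at hbl
    obtain ⟨v, hv, rfl⟩ := hbl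
    rw [List.pairwise_reverse]
    have h1 : ((List.range l.length).filter fun k => ent l k == v).Pairwise (· < ·) :=
      List.pairwise_lt_range.filter _
    refine h1.imp_of_mem ?_
    intro a b ha hb hab
    simp only [List.mem_filter, beq_iff_eq] at ha hb
    exact Or.inr ⟨by omega, hab⟩
  · rw [List.pairwise_map, List.pairwise_reverse]
    refine List.pairwise_lt_range.imp_of_mem ?_
    intro a b _ _ hab
    intro x hx y hy
    simp only [List.mem_reverse, List.mem_filter, beq_iff_eq] at hx hy
    exact Or.inl (by omega)

lemma nodup_reading (l : List ℕ) : (readingList l).Nodup :=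
  (pairwise_reading l).imp prec_ne

lemma length_reading (l : List ℕ) : (readingList l).length = l.length := by
  classical
  have h1 : (readingList l).toFinset = Finset.range l.length := by
    ext k; simp [List.mem_toFinset, mem_readingList, Finset.mem_range]
  have h2 := List.toFinset_card_of_nodup (nodup_reading l)
  rw [h1] at h2
  simp at h2
  omega

lemma rL_lt {l : List ℕ} {i : ℕ} (hi : i < l.length) :
    (readingList l).getD i 0 < l.length := by
  rw [List.getD_eq_getElem _ _ (by rw [length_reading]; exact hi)]
  exact mem_readingList.mp (List.getElem_mem _)

lemma rL_inj {l : List ℕ} {i j : ℕ} (hi : i < l.length) (hj : j < l.length)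
    (h : (readingList l).getD i 0 = (readingList l).getD j 0) : i = j := by
  have hi' : i < (readingList l).length := by rw [length_reading]; exact hi
  have hj' : j < (readingList l).length := by rw [length_reading]; exact hj
  rw [List.getD_eq_getElem _ _ hi', List.getD_eq_getElem _ _ hj'] at h
  have := List.nodup_iff_injective_get.mp (nodup_reading l)
    (a₁ := ⟨i, hi'⟩) (a₂ := ⟨j, hj'⟩) (by simpa [List.get_eq_getElem] using h)
  exact congrArg Fin.val this

lemma rL_prec {l : List ℕ} {i j : ℕ} (hij : i < j) (hj : j < l.length) :
    prec l ((readingList l).getD i 0) ((readingList l).getD j 0) := by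
  have hj' : j < (readingList l).length := by rw [length_reading]; exact hj
  have hi' : i < (readingList l).length := by omega
  rw [List.getD_eq_getElem _ _ hi', List.getD_eq_getElem _ _ hj']
  exact List.pairwise_iff_get.mp (pairwise_reading l) ⟨i, hi'⟩ ⟨j, hj'⟩ hij

lemma rL_surj {l : List ℕ} {k : ℕ} (hk : k < l.length) :
    ∃ i < l.length, (readingList l).getD i 0 = k := by
  have hmem : k ∈ readingList l := mem_readingList.mpr hk
  obtain ⟨i, hi, he⟩ := List.getElem_of_mem hmem
  refine ⟨i, by rw [← length_reading]; exact hi, ?_⟩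
  rw [List.getD_eq_getElem _ _ hi]
  exact he

lemma rL_between {l : List ℕ} {i : ℕ} (h1 : 1 ≤ i) (hi : i < l.length) :
    ∀ z < l.length, ¬ (prec l ((readingList l).getD (i-1) 0) z ∧
      prec l z ((readingList l).getD i 0)) := by
  rintro z hz ⟨hxz, hzy⟩
  obtain ⟨p, hp, rfl⟩ := rL_surj hz
  rcases lt_trichotomy p (i-1) with h | h | h
  · exact prec_asymm (rL_prec h (by omega)) hxz
  · exact prec_ne hxz (by rw [h])
  · rcases lt_trichotomy p i with h' | h' | h'
    · omega
    · exact prec_ne hzy (by rw [h'])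
    · exact prec_asymm (rL_prec h' hp) hzy

end Pf
end DeltaCat
namespace DeltaCat
namespace Pf

lemma main_iff {l : List ℕ} (hl : IsDyck l) {x y : ℕ} (hx : x < l.length) (hy : y < l.length)
    (hxy : prec l x y) (hnb : ∀ z < l.length, ¬ (prec l x z ∧ prec l z y)) :
    (bval l x < bval l y ↔ IsPeak l y) := by
  classical
  rcases hxy with hlt | ⟨heq, hyx⟩
  · -- Case B : ent l y < ent l x
    have hx1 : ent l x = ent l y + 1 := by
      by_contra hcon
      obtain ⟨zz, hzz, hezz⟩ := attained hl hx (v := ent l y + 1) (by omega)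
      exact hnb zz hzz ⟨Or.inl (by omega), Or.inl (by omega)⟩
    have f1 : ∀ j, j < l.length → y < j → ent l j ≠ ent l y := by
      intro j hj hyj hej
      exact hnb j hj ⟨Or.inl (by omega), Or.inr ⟨hej, hyj⟩⟩
    have f2 : ∀ j, j < x → ent l j ≠ ent l x := by
      intro j hj hej
      exact hnb j (by omega) ⟨Or.inr ⟨hej.symm, hj⟩, Or.inl (by omega)⟩
    have hby : bval l y =
        ((Finset.range l.length).filter (fun j => j < y ∧ ent l j = ent l y + 1)).card := by
      unfold bval
      have : (Finset.range l.length).filter (fun j => y < j ∧ ent l j = ent l y) = ∅ := by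
        rw [Finset.filter_eq_empty_iff]
        intro j hj
        rw [Finset.mem_range] at hj
        push_neg
        intro h1
        exact f1 j hj h1
      rw [this]
      simp
    have hbx : bval l x =
        ((Finset.range l.length).filter (fun j => x < j ∧ ent l j = ent l x)).card := by
      unfold bval
      have : (Finset.range l.length).filter (fun j => j < x ∧ ent l j = ent l x + 1) = ∅ := by
        rw [Finset.filter_eq_empty_iff]
        intro j hj
        rw [Finset.mem_range] at hj
        push_neg
        intro h1 h2
        obtain ⟨m, _, hmj, hm3, _⟩ := cross hl (p := 0) (q := j) (c := ent l y + 1)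
          (Nat.zero_le j) hj (by rw [hl.2.1]; omega) (by omega)
        exact f2 m (by omega) (by omega)
      rw [this]
      simp
    set A := (Finset.range l.length).filter (fun j => ent l j = ent l y + 1) with hA
    have hAx : A = insert x ((Finset.range l.length).filter (fun j => x < j ∧ ent l j = ent l x)) := by
      ext j
      simp only [hA, Finset.mem_insert, Finset.mem_filter, Finset.mem_range]
      constructor
      · rintro ⟨hj, hej⟩
        rcases lt_trichotomy j x with h | h | h
        · exact absurd (by omega : ent l j = ent l x) (f2 j h)
        · exact Or.inl h
        · exact Or.inr ⟨hj, h, by omega⟩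
      · rintro (rfl | ⟨hj, _, hej⟩)
        · exact ⟨hx, by omega⟩
        · exact ⟨hj, by omega⟩
    have hcardA : A.card = bval l x + 1 := by
      rw [hbx, hAx, Finset.card_insert_of_notMem (by simp)]
    have hbyA : bval l y = (A.filter (fun j => j < y)).card := by
      rw [hby]
      congr 1
      ext j
      simp only [hA, Finset.mem_filter, Finset.mem_range]
      tauto
    by_cases hr : IsRise l y
    · -- rise: bval y ≤ bval x
      obtain ⟨hy1, hey1⟩ := hr
      have hy1A : y + 1 ∈ A := by
        simp only [hA, Finset.mem_filter, Finset.mem_range]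
        exact ⟨hy1, by omega⟩
      have hss : A.filter (fun j => j < y) ⊂ A :=
        ⟨Finset.filter_subset _ _, fun hsub =>
          absurd (Finset.mem_filter.mp (hsub hy1A)).2 (by omega)⟩
      have := Finset.card_lt_card hss
      constructor
      · intro hlt2; omega
      · rintro ⟨_, hnr⟩; exact absurd ⟨hy1, hey1⟩ hnr
    · -- peak
      have hfilt : A.filter (fun j => j < y) = A := by
        rw [Finset.filter_eq_self]
        intro j hj
        simp only [hA, Finset.mem_filter, Finset.mem_range] at hj
        obtain ⟨hjn, hej⟩ := hj
        rcases lt_trichotomy j y with h | h | h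
        · exact h
        · exfalso; rw [h] at hej; omega
        · exfalso
          rcases eq_or_lt_of_le (by omega : y + 1 ≤ j) with h1 | h1
          · exact hr ⟨by omega, by rw [← h1] at hej; omega⟩
          · have hstep : ent l (y+1) ≤ ent l y + 1 := step hl (by omega)
            have hne : ent l (y+1) ≠ ent l y + 1 := fun hcon => hr ⟨by omega, hcon⟩
            obtain ⟨m, hm1, hm2, hm3, _⟩ := cross hl (p := y+1) (q := j) (c := ent l y)
              (by omega) (by omega) (by omega) (by omega)
            exact f1 m (by omega) (by omega) hm3
      constructor
      · intro _; exact ⟨hy, hr⟩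
      · intro _; rw [hbyA, hfilt]; omega
  · -- Case A : ent l x = ent l y, y < x
    have hb0 : ∀ j, y < j → j < x → ent l j ≠ ent l y := by
      intro j hj1 hj2 hej
      exact hnb j (by omega) ⟨Or.inr ⟨by omega, hj2⟩, Or.inr ⟨hej, hj1⟩⟩
    set C := (Finset.range l.length).filter (fun j => y < j ∧ j < x ∧ ent l j = ent l y + 1) with hC
    have h1 : (Finset.range l.length).filter (fun j => y < j ∧ ent l j = ent l y) =
        insert x ((Finset.range l.length).filter (fun j => x < j ∧ ent l j = ent l x)) := by
      ext j
      simp only [Finset.mem_insert, Finset.mem_filter, Finset.mem_range]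
      constructor
      · rintro ⟨hj, hyj, hej⟩
        rcases lt_trichotomy j x with h | h | h
        · exact absurd hej (hb0 j hyj h)
        · exact Or.inl h
        · exact Or.inr ⟨hj, h, by omega⟩
      · rintro (rfl | ⟨hj, hxj, hej⟩)
        · exact ⟨hx, hyx, heq⟩
        · exact ⟨hj, by omega, by omega⟩
    have h2 : (Finset.range l.length).filter (fun j => j < x ∧ ent l j = ent l x + 1) =
        ((Finset.range l.length).filter (fun j => j < y ∧ ent l j = ent l y + 1)) ∪ C := by
      ext j
      simp only [hC, Finset.mem_union, Finset.mem_filter, Finset.mem_range]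
      constructor
      · rintro ⟨hj, hjx, hej⟩
        rcases lt_trichotomy j y with h | h | h
        · exact Or.inl ⟨hj, h, by omega⟩
        · exfalso; rw [h] at hej; omega
        · exact Or.inr ⟨hj, h, hjx, by omega⟩
      · rintro (⟨hj, hjy, hej⟩ | ⟨hj, _, hjx, hej⟩)
        · exact ⟨hj, by omega, by omega⟩
        · exact ⟨hj, hjx, by omega⟩
    have hdisj : Disjoint ((Finset.range l.length).filter (fun j => j < y ∧ ent l j = ent l y + 1)) C := by
      rw [Finset.disjoint_left]
      intro j hj hjC
      simp only [hC, Finset.mem_filter, Finset.mem_range] at hj hjC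
      omega
    have hkey : bval l y + C.card = bval l x + 1 := by
      unfold bval
      rw [h1, h2, Finset.card_insert_of_notMem (by simp),
        Finset.card_union_of_disjoint hdisj]
      ring
    by_cases hr : IsRise l y
    · obtain ⟨hy1, hey1⟩ := hr
      have hmem : y + 1 ∈ C := by
        simp only [hC, Finset.mem_filter, Finset.mem_range]
        have : ent l (y+1) = ent l y + 1 := hey1
        refine ⟨hy1, by omega, ?_, this⟩
        have : y + 1 ≠ x := fun hcon => by rw [← hcon] at heq; omega
        omega
      have hpos : 0 < C.card := Finset.card_pos.mpr ⟨_, hmem⟩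
      constructor
      · intro hlt2; omega
      · rintro ⟨_, hnr⟩; exact absurd ⟨hy1, hey1⟩ hnr
    · have hCe : C = ∅ := by
        rw [Finset.eq_empty_iff_forall_notMem]
        intro j hj
        simp only [hC, Finset.mem_filter, Finset.mem_range] at hj
        obtain ⟨hjn, hyj, hjx, hej⟩ := hj
        rcases eq_or_lt_of_le (by omega : y + 1 ≤ j) with h1 | h1
        · exact hr ⟨by omega, by rw [← h1] at hej; exact hej⟩
        · have hstep : ent l (y+1) ≤ ent l y + 1 := step hl (by omega)
          have hne : ent l (y+1) ≠ ent l y + 1 := fun hcon => hr ⟨by omega, hcon⟩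
          obtain ⟨m, hm1, hm2, hm3, _⟩ := cross hl (p := y+1) (q := j) (c := ent l y)
            (by omega) (by omega) (by omega) (by omega)
          exact hb0 m (by omega) (by omega) hm3
      rw [hCe] at hkey
      simp only [Finset.card_empty, Nat.add_zero] at hkey
      constructor
      · intro _; exact ⟨hy, hr⟩
      · intro _; omega

end Pf
end DeltaCat
namespace DeltaCat
namespace Pf

lemma lastMax_spec {l : List ℕ} (hl : IsDyck l) :
    lastMaxRow l < l.length ∧ ent l (lastMaxRow l) = l.foldr max 0 ∧
      ∀ j < l.length, ent l j = l.foldr max 0 → j ≤ lastMaxRow l := by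
  classical
  set F := (Finset.range l.length).filter
    (fun i => ∀ j ∈ Finset.range l.length, ent l j ≤ ent l i) with hF
  obtain ⟨k, hk, hke⟩ := foldr_attained l hl.1
  have hkF : k ∈ F := by
    simp only [hF, Finset.mem_filter, Finset.mem_range]
    exact ⟨hk, fun j hj => by rw [hke]; exact ent_le_foldr l j hj⟩
  have hFne : F.Nonempty := ⟨k, hkF⟩
  obtain ⟨i, hiF, hisup⟩ := Finset.exists_mem_eq_sup F hFne id
  have hlm : lastMaxRow l = i := hisup
  simp only [hF, Finset.mem_filter, Finset.mem_range] at hiF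
  have h1 : lastMaxRow l < l.length := by rw [hlm]; exact hiF.1
  have h2 : ent l (lastMaxRow l) = l.foldr max 0 := by
    rw [hlm]
    have hle : ent l i ≤ l.foldr max 0 := ent_le_foldr l i hiF.1
    have hge : ent l k ≤ ent l i := hiF.2 k hk
    omega
  refine ⟨h1, h2, fun j hj hje => ?_⟩
  have hjF : j ∈ F := by
    simp only [hF, Finset.mem_filter, Finset.mem_range]
    exact ⟨hj, fun j' hj' => by rw [hje]; exact ent_le_foldr l j' hj'⟩
  have := Finset.le_sup (f := id) hjF
  exact this

lemma r0_eq {l : List ℕ} (hl : IsDyck l) :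
    (readingList l).getD 0 0 = lastMaxRow l := by
  obtain ⟨hm1, hm2, hm3⟩ := lastMax_spec hl
  obtain ⟨p, hp, hpe⟩ := rL_surj hm1
  rcases Nat.eq_zero_or_pos p with rfl | hppos
  · exact hpe
  · exfalso
    have hn1 : 0 < l.length := by omega
    have hprec1 : prec l ((readingList l).getD 0 0) (lastMaxRow l) := by
      rw [← hpe]; exact rL_prec hppos hp
    set r0 := (readingList l).getD 0 0 with hr0
    have hr0lt : r0 < l.length := rL_lt hn1
    have hr0ne : r0 ≠ lastMaxRow l := by
      intro hcon
      rw [← hpe] at hcon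
      exact absurd (rL_inj hn1 hp hcon) (by omega)
    have hle : ent l r0 ≤ ent l (lastMaxRow l) := by
      rw [hm2]; exact ent_le_foldr l r0 hr0lt
    have hprec2 : prec l (lastMaxRow l) r0 := by
      rcases eq_or_lt_of_le hle with heq | hlt
      · exact Or.inr ⟨heq.symm, lt_of_le_of_ne (hm3 r0 hr0lt (by omega)) hr0ne⟩
      · exact Or.inl hlt
    exact prec_asymm hprec1 hprec2

lemma bAt_iff {l : List ℕ} (hl : IsDyck l) {i : ℕ} (h1 : 1 ≤ i) (h2 : i < l.length) :
    (bAt l (i-1) < bAt l i ↔ IsPeak l ((readingList l).getD i 0)) := by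
  have := main_iff hl (x := (readingList l).getD (i-1) 0) (y := (readingList l).getD i 0)
    (rL_lt (by omega)) (rL_lt h2) (rL_prec (by omega) h2) (rL_between h1 h2)
  exact this

lemma prod_peak {M : Type*} [CommMonoid M] {l : List ℕ} (hl : IsDyck l) (f : ℕ → M) :
    ∏ i ∈ (Finset.Ico 1 l.length).filter (fun i => bAt l (i-1) < bAt l i), f (bAt l i)
      = ∏ k ∈ (Finset.range l.length).filter (fun k => IsPeak l k ∧ k ≠ lastMaxRow l),
          f (bval l k) := by
  refine Finset.prod_nbij (fun i => (readingList l).getD i 0) ?_ ?_ ?_ ?_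
  · intro a ha
    simp only [Finset.mem_filter, Finset.mem_Ico] at ha
    obtain ⟨⟨ha1, ha2⟩, hab⟩ := ha
    simp only [Finset.mem_filter, Finset.mem_range]
    refine ⟨rL_lt ha2, (bAt_iff hl ha1 ha2).mp hab, ?_⟩
    intro hcon
    rw [← r0_eq hl] at hcon
    have := rL_inj ha2 (by omega) hcon
    omega
  · intro a ha b hb hab
    simp only [Finset.coe_filter, Set.mem_setOf_eq, Finset.mem_Ico] at ha hb
    exact rL_inj ha.1.2 hb.1.2 hab
  · intro k hk
    simp only [Finset.coe_filter, Set.mem_setOf_eq, Finset.mem_range] at hk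
    obtain ⟨hk1, hk2, hk3⟩ := hk
    obtain ⟨p, hp, hpe⟩ := rL_surj hk1
    have hppos : 1 ≤ p := by
      rcases Nat.eq_zero_or_pos p with rfl | h
      · exfalso; apply hk3; rw [← hpe, r0_eq hl]
      · exact h
    refine ⟨p, ?_, hpe⟩
    simp only [Finset.coe_filter, Set.mem_setOf_eq, Finset.mem_Ico]
    refine ⟨⟨hppos, hp⟩, (bAt_iff hl hppos hp).mpr (by rw [hpe]; exact hk2)⟩
  · intro a ha
    rfl

lemma prod_rise {M : Type*} [CommMonoid M] {l : List ℕ} (hl : IsDyck l) (f : ℕ → M) :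
    ∏ i ∈ (Finset.Ico 1 l.length).filter (fun i => ent l (i-1) < ent l i), f (ent l i)
      = ∏ k ∈ (Finset.range l.length).filter (fun k => IsRise l k), f (ent l (k+1)) := by
  refine Finset.prod_nbij (fun i => i - 1) ?_ ?_ ?_ ?_
  · intro a ha
    simp only [Finset.mem_filter, Finset.mem_Ico] at ha
    obtain ⟨⟨ha1, ha2⟩, hae⟩ := ha
    have hstep : ent l a ≤ ent l (a-1) + 1 := by
      have h : (a - 1) + 1 = a := by omega
      have := step hl (i := a - 1) (by omega)
      rwa [h] at this
    simp only [Finset.mem_filter, Finset.mem_range]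
    have h : (a - 1) + 1 = a := by omega
    refine ⟨by omega, ?_⟩
    unfold IsRise
    rw [h]
    exact ⟨ha2, by omega⟩
  · intro a ha b hb hab
    simp only [Finset.coe_filter, Set.mem_setOf_eq, Finset.mem_Ico] at ha hb
    have hab' : a - 1 = b - 1 := hab
    omega
  · intro k hk
    simp only [Finset.coe_filter, Set.mem_setOf_eq, Finset.mem_range] at hk
    obtain ⟨hk1, hk2⟩ := hk
    have hr1 : k + 1 < l.length := hk2.1
    have hr2 : ent l (k + 1) = ent l k + 1 := hk2.2
    refine ⟨k + 1, ?_, by show k + 1 - 1 = k; omega⟩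
    simp only [Finset.coe_filter, Set.mem_setOf_eq, Finset.mem_Ico]
    rw [Nat.add_sub_cancel]
    exact ⟨⟨by omega, hr1⟩, by omega⟩
  · intro a ha
    simp only [Finset.mem_filter, Finset.mem_Ico] at ha
    have h : (a - 1) + 1 = a := by omega
    rw [h]

end Pf
end DeltaCat
namespace DeltaCat
namespace Pf

lemma dinv_eq_sum_bval (l : List ℕ) :
    dinv l = ∑ k ∈ Finset.range l.length, bval l k := by
  classical
  unfold dinv dinvPairs bval
  rw [Finset.card_filter, Finset.sum_product]
  have h2 : ∑ k ∈ Finset.range l.length,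
      ((Finset.range l.length).filter (fun j => j < k ∧ ent l j = ent l k + 1)).card
      = ∑ i ∈ Finset.range l.length, ∑ j ∈ Finset.range l.length,
          if i < j ∧ ent l i = ent l j + 1 then 1 else 0 := by
    simp_rw [Finset.card_filter]
    rw [Finset.sum_comm]
  have h1 : ∑ k ∈ Finset.range l.length,
      ((Finset.range l.length).filter (fun j => k < j ∧ ent l j = ent l k)).card
      = ∑ i ∈ Finset.range l.length, ∑ j ∈ Finset.range l.length,
          if i < j ∧ ent l i = ent l j then 1 else 0 := by
    simp_rw [Finset.card_filter]
    refine Finset.sum_congr rfl fun i _ => Finset.sum_congr rfl fun j _ => ?_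
    congr 1
    simp only [eq_iff_iff]
    constructor
    · rintro ⟨h, he⟩; exact ⟨h, he.symm⟩
    · rintro ⟨h, he⟩; exact ⟨h, he.symm⟩
  rw [Finset.sum_add_distrib, h1, h2, ← Finset.sum_add_distrib]
  refine Finset.sum_congr rfl fun i _ => ?_
  rw [← Finset.sum_add_distrib]
  refine Finset.sum_congr rfl fun j _ => ?_
  show (if i < j ∧ (ent l i = ent l j ∨ ent l i = ent l j + 1) then 1 else 0)
      = ((if i < j ∧ ent l i = ent l j then 1 else 0)
        + if i < j ∧ ent l i = ent l j + 1 then 1 else 0)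
  split_ifs <;> omega

lemma area_eq_sum_ent (l : List ℕ) :
    area l = ∑ i ∈ Finset.range l.length, ent l i := by
  unfold area
  induction l with
  | nil => simp
  | cons a t ih =>
    rw [List.length_cons, Finset.sum_range_succ']
    simp only [ent, List.getD_cons_succ, List.getD_cons_zero]
    rw [List.sum_cons, ih]
    show _ = (∑ x ∈ Finset.range t.length, ent t x) + a
    rw [add_comm]

lemma sum_bval_le {l : List ℕ} {P : Finset ℕ} (hP : P ⊆ Finset.range l.length) :
    ∑ i ∈ P, bval l i ≤ dinv l := by
  rw [dinv_eq_sum_bval]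
  exact Finset.sum_le_sum_of_subset hP

lemma sum_rise_le {l : List ℕ} {R : Finset ℕ}
    (hR : R ⊆ (Finset.range l.length).filter (fun k => IsRise l k)) :
    ∑ i ∈ R, ent l (i + 1) ≤ area l := by
  rw [area_eq_sum_ent]
  rw [← Finset.sum_image (f := fun j => ent l j) (g := fun i => i + 1)
    (fun a ha b hb h => by exact Nat.succ_injective h)]
  refine Finset.sum_le_sum_of_subset ?_
  intro j hj
  simp only [Finset.mem_image] at hj
  obtain ⟨i, hi, rfl⟩ := hj
  have := hR hi
  simp only [Finset.mem_filter, Finset.mem_range] at this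
  exact Finset.mem_range.mpr this.2.1

end Pf
end DeltaCat

namespace Pf2

open DeltaCat DeltaCat.Pf

lemma qpow_zero : qpow 0 = 1 := by
  unfold qpow
  rw [LaurentPolynomial.T_zero, map_one]

lemma qpow_add (a b : ℤ) : qpow (a + b) = qpow a * qpow b := by
  unfold qpow
  rw [LaurentPolynomial.T_add, map_mul]

lemma tpow_zero : tpow 0 = 1 := LaurentPolynomial.T_zero

lemma tpow_add (a b : ℤ) : tpow (a + b) = tpow a * tpow b := LaurentPolynomial.T_add a b

lemma qpow_sum {ι : Type*} (s : Finset ι) (f : ι → ℤ) :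
    qpow (∑ i ∈ s, f i) = ∏ i ∈ s, qpow (f i) := by
  classical
  induction s using Finset.induction_on with
  | empty => simp [qpow_zero]
  | @insert a s' hx ih =>
    rw [Finset.sum_insert hx, Finset.prod_insert hx, qpow_add, ih]

lemma tpow_sum {ι : Type*} (s : Finset ι) (f : ι → ℤ) :
    tpow (∑ i ∈ s, f i) = ∏ i ∈ s, tpow (f i) := by
  classical
  induction s using Finset.induction_on with
  | empty => simp [tpow_zero]
  | @insert a s' hx ih =>
    rw [Finset.sum_insert hx, Finset.prod_insert hx, tpow_add, ih]

end Pf2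
namespace Pf2

open DeltaCat DeltaCat.Pf

lemma lastMax_peak {l : List ℕ} (hl : IsDyck l) : IsPeak l (lastMaxRow l) := by
  obtain ⟨h1, h2, _⟩ := lastMax_spec hl
  refine ⟨h1, fun hr => ?_⟩
  obtain ⟨hr1, hr2⟩ := hr
  have := ent_le_foldr l (lastMaxRow l + 1) hr1
  omega

lemma peak_not_rise {l : List ℕ} {i : ℕ} (h : IsPeak l i) : ¬ IsRise l i := h.2

lemma peakSet_union {l : List ℕ} {P R : Finset ℕ}
    (hP : ∀ i ∈ P, IsPeak l i) (hR : ∀ i ∈ R, IsRise l i) :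
    peakSet l (P ∪ R) = P ∧ riseSet l (P ∪ R) = R := by
  constructor
  · unfold peakSet
    rw [Finset.filter_union]
    rw [Finset.filter_eq_self.mpr hP,
      Finset.filter_eq_empty_iff.mpr (fun i hi hpk => hpk.2 (hR i hi)),
      Finset.union_empty]
  · unfold riseSet
    rw [Finset.filter_union]
    rw [Finset.filter_eq_empty_iff.mpr (fun i hi hr => (hP i hi).2 hr),
      Finset.filter_eq_self.mpr hR, Finset.empty_union]

lemma split_S {l : List ℕ} {S : Finset ℕ} (hv : ValidDec l S) :
    peakSet l S ∪ riseSet l S = S := by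
  unfold peakSet riseSet
  rw [← Finset.filter_or]
  rw [Finset.filter_eq_self]
  intro i hi
  have hi' : i < l.length := hv.1 i hi
  by_cases hr : IsRise l i
  · exact Or.inr hr
  · exact Or.inl ⟨hi', hr⟩

/-- expansion of a product of `1 + f i` -/
lemma expand_prod {M : Type*} [CommRing M] (s : Finset ℕ) (f : ℕ → M) :
    ∏ i ∈ s, (1 + f i) = ∑ t ∈ s.powerset, ∏ i ∈ t, f i := by
  classical
  have h := Finset.prod_add f (fun _ => 1) s
  simp only [Finset.prod_const_one, mul_one] at h
  rw [← h]
  exact Finset.prod_congr rfl fun i _ => add_comm _ _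

lemma value_eq {l : List ℕ} (hl : IsDyck l) (S : Finset ℕ)
    (hS1 : peakSet l S ⊆ Finset.range l.length)
    (hS2 : riseSet l S ⊆ (Finset.range l.length).filter (fun k => IsRise l k)) :
    (MvPolynomial.C (qpow (dinvC l S) * tpow (areaC l S)) : ZW)
        * z ^ (peakSet l S).card * w ^ (riseSet l S).card
      = MvPolynomial.C (qpow (dinv l) * tpow (area l))
          * (∏ i ∈ peakSet l S, (z * MvPolynomial.C (qpow (-(bval l i : ℤ)))))
          * (∏ i ∈ riseSet l S, (w * MvPolynomial.C (tpow (-(ent l (i + 1) : ℤ))))) := by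
  have h1 : ∑ i ∈ peakSet l S, bval l i ≤ dinv l := sum_bval_le hS1
  have h2 : ∑ i ∈ riseSet l S, ent l (i + 1) ≤ area l := sum_rise_le hS2
  have e1 : qpow (dinvC l S) = qpow (dinv l) * ∏ i ∈ peakSet l S, qpow (-(bval l i : ℤ)) := by
    rw [← qpow_sum, ← qpow_add]
    congr 1
    unfold dinvC
    rw [Nat.cast_sub h1, Nat.cast_sum]
    rw [Finset.sum_neg_distrib]
    ring
  have e2 : tpow (areaC l S) = tpow (area l) * ∏ i ∈ riseSet l S, tpow (-(ent l (i+1) : ℤ)) := by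
    rw [← tpow_sum, ← tpow_add]
    congr 1
    unfold areaC
    rw [Nat.cast_sub h2, Nat.cast_sum]
    rw [Finset.sum_neg_distrib]
    ring
  have hz : ∏ i ∈ peakSet l S, (z * MvPolynomial.C (qpow (-(bval l i : ℤ))) : ZW)
      = z ^ (peakSet l S).card * MvPolynomial.C (∏ i ∈ peakSet l S, qpow (-(bval l i : ℤ))) := by
    rw [Finset.prod_mul_distrib, Finset.prod_const, map_prod]
  have hw : ∏ i ∈ riseSet l S, (w * MvPolynomial.C (tpow (-(ent l (i + 1) : ℤ))) : ZW)
      = w ^ (riseSet l S).card * MvPolynomial.C (∏ i ∈ riseSet l S, tpow (-(ent l (i + 1) : ℤ))) := by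
    rw [Finset.prod_mul_distrib, Finset.prod_const, map_prod]
  rw [e1, e2, hz, hw]
  simp only [map_mul]
  ring

lemma per_path {l : List ℕ} (hl : IsDyck l) :
    ∑ S ∈ (Finset.range l.length).powerset.filter (fun S => ValidDec l S),
        (MvPolynomial.C (qpow (dinvC l S) * tpow (areaC l S)) : ZW)
          * z ^ (peakSet l S).card * w ^ (riseSet l S).card
      = MvPolynomial.C (qpow (dinv l) * tpow (area l))
          * (∏ k ∈ (Finset.range l.length).filter (fun k => IsPeak l k ∧ k ≠ lastMaxRow l),
              (1 + z * MvPolynomial.C (qpow (-(bval l k : ℤ)))))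
          * (∏ k ∈ (Finset.range l.length).filter (fun k => IsRise l k),
              (1 + w * MvPolynomial.C (tpow (-(ent l (k + 1) : ℤ))))) := by
  classical
  set Pk := (Finset.range l.length).filter (fun k => IsPeak l k ∧ k ≠ lastMaxRow l) with hPkd
  set Rs := (Finset.range l.length).filter (fun k => IsRise l k) with hRsd
  have ex1 : ∏ k ∈ Pk, (1 + z * MvPolynomial.C (qpow (-(bval l k : ℤ))) : ZW)
      = ∑ P ∈ Pk.powerset, ∏ i ∈ P, (z * MvPolynomial.C (qpow (-(bval l i : ℤ)))) :=
    expand_prod _ _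
  have ex2 : ∏ k ∈ Rs, (1 + w * MvPolynomial.C (tpow (-(ent l (k + 1) : ℤ))) : ZW)
      = ∑ R ∈ Rs.powerset, ∏ i ∈ R, (w * MvPolynomial.C (tpow (-(ent l (i + 1) : ℤ)))) :=
    expand_prod _ _
  have hbridge : (MvPolynomial.C (qpow (dinv l) * tpow (area l)) : ZW)
        * (∑ P ∈ Pk.powerset, ∏ i ∈ P, (z * MvPolynomial.C (qpow (-(bval l i : ℤ)))))
        * (∑ R ∈ Rs.powerset, ∏ i ∈ R, (w * MvPolynomial.C (tpow (-(ent l (i + 1) : ℤ)))))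
      = ∑ pr ∈ Pk.powerset ×ˢ Rs.powerset,
          (MvPolynomial.C (qpow (dinv l) * tpow (area l)) : ZW)
            * (∏ i ∈ pr.1, (z * MvPolynomial.C (qpow (-(bval l i : ℤ)))))
            * (∏ i ∈ pr.2, (w * MvPolynomial.C (tpow (-(ent l (i + 1) : ℤ))))) := by
    rw [mul_assoc, Finset.sum_mul_sum, Finset.mul_sum, Finset.sum_product]
    refine Finset.sum_congr rfl fun P _ => ?_
    rw [Finset.mul_sum]
    exact Finset.sum_congr rfl fun R _ => by ring
  rw [ex1, ex2, hbridge]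
  refine Finset.sum_nbij' (fun S => (peakSet l S, riseSet l S)) (fun pr => pr.1 ∪ pr.2)
    ?_ ?_ ?_ ?_ ?_
  · intro S hS
    simp only [Finset.mem_filter, Finset.mem_powerset] at hS
    obtain ⟨hsub, hv⟩ := hS
    simp only [Finset.mem_product, Finset.mem_powerset]
    constructor
    · intro i hi
      simp only [peakSet, Finset.mem_filter] at hi
      simp only [hPkd, Finset.mem_filter, Finset.mem_range]
      exact ⟨hv.1 i hi.1, hi.2, fun hcon => hv.2 (hcon ▸ hi.1)⟩
    · intro i hi
      simp only [riseSet, Finset.mem_filter] at hi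
      simp only [hRsd, Finset.mem_filter, Finset.mem_range]
      exact ⟨hv.1 i hi.1, hi.2⟩
  · intro pr hpr
    simp only [Finset.mem_product, Finset.mem_powerset] at hpr
    obtain ⟨hp, hr⟩ := hpr
    simp only [Finset.mem_filter, Finset.mem_powerset]
    have hPpk : ∀ i ∈ pr.1, IsPeak l i := fun i hi => by
      have := hp hi; simp only [hPkd, Finset.mem_filter] at this; exact this.2.1
    have hRrs : ∀ i ∈ pr.2, IsRise l i := fun i hi => by
      have := hr hi; simp only [hRsd, Finset.mem_filter] at this; exact this.2
    constructor
    · intro i hi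
      rcases Finset.mem_union.mp hi with h | h
      · exact Finset.mem_range.mpr ((hPpk i h).1)
      · exact Finset.mem_range.mpr (by have := (hRrs i h).1; omega)
    · constructor
      · intro i hi
        rcases Finset.mem_union.mp hi with h | h
        · exact (hPpk i h).1
        · have := (hRrs i h).1; omega
      · intro hcon
        rcases Finset.mem_union.mp hcon with h | h
        · have := hp h; simp only [hPkd, Finset.mem_filter] at this; exact this.2.2 rfl
        · exact (lastMax_peak hl).2 (hRrs _ h)
  · intro S hS
    simp only [Finset.mem_filter, Finset.mem_powerset] at hS
    exact split_S hS.2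
  · intro pr hpr
    simp only [Finset.mem_product, Finset.mem_powerset] at hpr
    obtain ⟨hp, hr⟩ := hpr
    have hPpk : ∀ i ∈ pr.1, IsPeak l i := fun i hi => by
      have := hp hi; simp only [hPkd, Finset.mem_filter] at this; exact this.2.1
    have hRrs : ∀ i ∈ pr.2, IsRise l i := fun i hi => by
      have := hr hi; simp only [hRsd, Finset.mem_filter] at this; exact this.2
    obtain ⟨h1, h2⟩ := peakSet_union hPpk hRrs
    exact Prod.ext h1 h2
  · intro S hS
    simp only [Finset.mem_filter, Finset.mem_powerset] at hS
    refine value_eq hl S ?_ ?_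
    · intro i hi
      simp only [peakSet, Finset.mem_filter] at hi
      exact Finset.mem_range.mpr (hS.2.1 i hi.1)
    · intro i hi
      simp only [riseSet, Finset.mem_filter] at hi
      simp only [Finset.mem_filter, Finset.mem_range]
      exact ⟨hS.2.1 i hi.1, hi.2⟩

end Pf2
namespace Pf2

open DeltaCat DeltaCat.Pf

lemma allSeqs_len {n : ℕ} {l : List ℕ} (h : l ∈ allSeqs n) : l.length = n := by
  unfold allSeqs at h
  rw [Finset.mem_image] at h
  obtain ⟨v, _, rfl⟩ := h
  simp

lemma rhs_split (n : ℕ) :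
    ∑ p ∈ decPaths n,
        (MvPolynomial.C (qpow (dinvC p.1 p.2) * tpow (areaC p.1 p.2)) : ZW)
          * z ^ (peakSet p.1 p.2).card * w ^ (riseSet p.1 p.2).card
      = ∑ l ∈ dyckPaths n, ∑ S ∈ (Finset.range n).powerset.filter (fun S => ValidDec l S),
          (MvPolynomial.C (qpow (dinvC l S) * tpow (areaC l S)) : ZW)
            * z ^ (peakSet l S).card * w ^ (riseSet l S).card := by
  classical
  unfold decPaths dyckPaths
  rw [Finset.sum_filter, Finset.sum_product]
  rw [Finset.sum_filter]
  refine Finset.sum_congr rfl fun l _ => ?_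
  by_cases hd : IsDyck l
  · simp only [hd, true_and, if_true, Finset.sum_filter]
  · simp [hd]

end Pf2

/-- The two expressions for the four variable Catalan polynomial agree:
`Σ_D q^{dinv(D)} t^{area(D)} Π_{b_i > b_{i-1}} (1 + z q^{-b_i}) Π_{a_i > a_{i-1}} (1 + w t^{-a_i})
 = Σ_{(D,S)} q^{dinv_∘} t^{area_∘} z^{peak_∘} w^{rise_∘}`,
where on the left the first product is over positions `2 ≤ i ≤ n` in reading order
(0-indexed: `1 ≤ i ≤ n-1`) and the second over rows `2 ≤ i ≤ n`. -/
theorem decorated_catalan_product_formula (n : ℕ) (hn : 1 ≤ n) :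
    ∑ l ∈ dyckPaths n,
        (MvPolynomial.C (qpow (dinv l) * tpow (area l)) : ZW)
          * (∏ i ∈ (Finset.Ico 1 n).filter (fun i => bAt l (i - 1) < bAt l i),
              (1 + z * MvPolynomial.C (qpow (-(bAt l i : ℤ)))))
          * (∏ i ∈ (Finset.Ico 1 n).filter (fun i => ent l (i - 1) < ent l i),
              (1 + w * MvPolynomial.C (tpow (-(ent l i : ℤ)))))
      = ∑ p ∈ decPaths n,
          MvPolynomial.C (qpow (dinvC p.1 p.2) * tpow (areaC p.1 p.2))
            * z ^ (peakSet p.1 p.2).card * w ^ (riseSet p.1 p.2).card := by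
  classical
  rw [Pf2.rhs_split n]
  refine Finset.sum_congr rfl fun l hl => ?_
  rw [DeltaCat.dyckPaths, Finset.mem_filter] at hl
  have hd : DeltaCat.IsDyck l := hl.2
  have hlen : l.length = n := Pf2.allSeqs_len hl.1
  subst hlen
  have hp : ∏ i ∈ (Finset.Ico 1 l.length).filter (fun i => bAt l (i - 1) < bAt l i),
      (1 + z * MvPolynomial.C (qpow (-(bAt l i : ℤ))))
      = ∏ k ∈ (Finset.range l.length).filter
          (fun k => DeltaCat.IsPeak l k ∧ k ≠ DeltaCat.lastMaxRow l),
        (1 + z * MvPolynomial.C (qpow (-(bval l k : ℤ)))) :=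
    DeltaCat.Pf.prod_peak hd (fun b => 1 + z * MvPolynomial.C (qpow (-(b : ℤ))))
  have hr : ∏ i ∈ (Finset.Ico 1 l.length).filter (fun i => ent l (i - 1) < ent l i),
      (1 + w * MvPolynomial.C (tpow (-(ent l i : ℤ))))
      = ∏ k ∈ (Finset.range l.length).filter (fun k => DeltaCat.IsRise l k),
        (1 + w * MvPolynomial.C (tpow (-(ent l (k + 1) : ℤ)))) :=
    DeltaCat.Pf.prod_rise hd (fun a => 1 + w * MvPolynomial.C (tpow (-(a : ℤ))))
  rw [hp, hr]
  exact (Pf2.per_path hd).symm
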